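/- Fix q > 1 and y > 0. If 1 < p₁ < p₂ and x₁, x₂ ∈ (0,∞) satisfy ∫_0^{x₁} (1+t^q)^{-1/p₁} dt = y and ∫_0^{x₂} (1+t^q)^{-1/p₂} dt = y, then x₂ < x₁. In other words, the function p ↦ sinh_{p,q}(y) is decreasing on (1,∞). -/
import Mathlib

open MeasureTheory

lemma sinh_aux_cont (q p x : ℝ) (hq : 0 < q) :
    ContinuousOn (fun t : ℝ => (1 + t ^ q) ^ (-(1 / p))) (Set.Icc 0 x) := by
  have hinner : ContinuousOn (fun t : ℝ => 1 + t ^ q) (Set.Icc 0 x) :=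
    continuousOn_const.add (continuousOn_id.rpow_const fun t _ => Or.inr hq.le)
  exact hinner.rpow_const fun t ht => Or.inl (by
    have := Real.rpow_nonneg ht.1 q
    intro h; linarith)

theorem sinh_pq_decreasing_in_p (q y : ℝ) (hq : 1 < q) (hy : 0 < y)
    (p₁ p₂ x₁ x₂ : ℝ) (hp₁ : 1 < p₁) (hp : p₁ < p₂)
    (hx₁ : x₁ ∈ Set.Ioi (0:ℝ)) (hx₂ : x₂ ∈ Set.Ioi (0:ℝ))
    (h₁ : (∫ t in (0:ℝ)..x₁, (1 + t ^ q) ^ (-(1 / p₁))) = y)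
    (h₂ : (∫ t in (0:ℝ)..x₂, (1 + t ^ q) ^ (-(1 / p₂))) = y) :
    x₂ < x₁ := by
  have hq0 : (0:ℝ) < q := by linarith
  simp only [Set.mem_Ioi] at hx₁ hx₂
  by_contra hcon
  push_neg at hcon
  -- step 1: ∫_0^{x₁} f₁ < ∫_0^{x₁} f₂
  have hstep1 : (∫ t in (0:ℝ)..x₁, (1 + t ^ q) ^ (-(1 / p₁))) <
      ∫ t in (0:ℝ)..x₁, (1 + t ^ q) ^ (-(1 / p₂)) := by
    apply intervalIntegral.integral_lt_integral_of_continuousOn_of_le_of_exists_lt hx₁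
      (sinh_aux_cont q p₁ x₁ hq0) (sinh_aux_cont q p₂ x₁ hq0)
    · intro t ht
      have ht0 : 0 < t := ht.1
      have h1 : 1 < 1 + t ^ q := by
        have := Real.rpow_pos_of_pos ht0 q; linarith
      have hexp : -(1 / p₁) < -(1 / p₂) := by
        have : 1 / p₂ < 1 / p₁ := by
          apply one_div_lt_one_div_of_lt <;> linarith
        linarith
      exact (Real.rpow_lt_rpow_of_exponent_lt h1 hexp).le
    · refine ⟨x₁, Set.right_mem_Icc.2 hx₁.le, ?_⟩
      have h1 : 1 < 1 + x₁ ^ q := by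
        have := Real.rpow_pos_of_pos hx₁ q; linarith
      apply Real.rpow_lt_rpow_of_exponent_lt h1
      have : 1 / p₂ < 1 / p₁ := by
        apply one_div_lt_one_div_of_lt <;> linarith
      linarith
  -- step 2: ∫_0^{x₁} f₂ ≤ ∫_0^{x₂} f₂
  have hint : ∀ a b : ℝ, 0 ≤ a → 0 ≤ b → IntervalIntegrable
      (fun t : ℝ => (1 + t ^ q) ^ (-(1 / p₂))) volume a b := by
    intro a b ha hb
    apply ContinuousOn.intervalIntegrable
    apply (sinh_aux_cont q p₂ (max a b) hq0).mono
    exact Set.uIcc_subset_Icc ⟨ha, le_max_left a b⟩ ⟨hb, le_max_right a b⟩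
  have hstep2 : (∫ t in (0:ℝ)..x₁, (1 + t ^ q) ^ (-(1 / p₂))) ≤
      ∫ t in (0:ℝ)..x₂, (1 + t ^ q) ^ (-(1 / p₂)) := by
    rw [← intervalIntegral.integral_add_adjacent_intervals (hint 0 x₁ le_rfl hx₁.le)
      (hint x₁ x₂ hx₁.le hx₂.le)]
    have : 0 ≤ ∫ t in x₁..x₂, (1 + t ^ q) ^ (-(1 / p₂)) := by
      apply intervalIntegral.integral_nonneg hcon
      intro t ht
      have h0t : 0 < t := lt_of_lt_of_le hx₁ ht.1
      positivity
    linarith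
  rw [h₁] at hstep1
  rw [h₂] at hstep2
  linarith
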